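/- Let P ⊆ ℝ³ be the convex hull of the four points (0,0,0), (1,0,0), (0,1,0), (1,1,2). Then the set of points x ∈ ℤ³ such that x ∈ 3P and (1,1,1) − x ∈ P is exactly the singleton {(1,1,1)}. -/

import Mathlib

open Pointwise

/-- The polytope of the final example of Section 4: the convex hull of
`(0,0,0), (1,0,0), (0,1,0), (1,1,2)` in `ℝ³`. -/
noncomputable def Pex : Set (Fin 3 → ℝ) :=
  convexHull ℝ {![0,0,0], ![1,0,0], ![0,1,0], ![1,1,2]}

lemma mem_Pex_iff (p : Fin 3 → ℝ) :
    p ∈ Pex ↔ 0 ≤ p 2 ∧ p 2 ≤ 2 * p 0 ∧ p 2 ≤ 2 * p 1 ∧ 2 * p 0 + 2 * p 1 - p 2 ≤ 2 := by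
  constructor
  · intro hp
    have : Pex ⊆ {q : Fin 3 → ℝ |
        0 ≤ q 2 ∧ q 2 ≤ 2 * q 0 ∧ q 2 ≤ 2 * q 1 ∧ 2 * q 0 + 2 * q 1 - q 2 ≤ 2} := by
      apply convexHull_min
      · intro q hq
        simp only [Set.mem_insert_iff, Set.mem_singleton_iff] at hq
        rcases hq with h | h | h | h <;> subst h <;>
          refine ⟨by norm_num [Matrix.cons_val_two, Matrix.cons_val_zero, Matrix.cons_val_one, Matrix.head_cons, Matrix.tail_cons], by norm_num [Matrix.cons_val_two, Matrix.cons_val_zero, Matrix.cons_val_one, Matrix.head_cons, Matrix.tail_cons], by norm_num [Matrix.cons_val_two, Matrix.cons_val_zero, Matrix.cons_val_one, Matrix.head_cons, Matrix.tail_cons], by norm_num [Matrix.cons_val_two, Matrix.cons_val_zero, Matrix.cons_val_one, Matrix.head_cons, Matrix.tail_cons]⟩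
      · intro x hx y hy a b ha hb hab
        obtain ⟨hx1, hx2, hx3, hx4⟩ := hx
        obtain ⟨hy1, hy2, hy3, hy4⟩ := hy
        simp only [Set.mem_setOf_eq, Pi.add_apply, Pi.smul_apply, smul_eq_mul]
        refine ⟨by positivity, by nlinarith, by nlinarith, by nlinarith⟩
    exact this hp
  · rintro ⟨h0, h1, h2, h3⟩
    rw [Pex, convexHull_eq]
    refine ⟨Fin 4, Finset.univ,
      ![1 - (p 0 + p 1 - p 2 / 2), p 0 - p 2 / 2, p 1 - p 2 / 2, p 2 / 2],
      ![![0,0,0], ![1,0,0], ![0,1,0], ![1,1,2]], ?_, ?_, ?_, ?_⟩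
    · intro i _
      fin_cases i <;> simp <;> linarith
    · simp [Fin.sum_univ_four]; ring
    · intro i _
      fin_cases i <;> simp
    · rw [Finset.centerMass_eq_of_sum_1]
      · funext j
        fin_cases j <;>
          simp [Fin.sum_univ_four, Pi.add_apply, Pi.smul_apply, smul_eq_mul, Matrix.vecHead, Matrix.vecTail]
      · simp [Fin.sum_univ_four]; ring

/-- `3P ∩ ((1,1,1) − P) ∩ ℤ³ = {(1,1,1)}`. -/
theorem final_example_computation :
    {x : Fin 3 → ℤ | (fun i => (x i : ℝ)) ∈ (3 : ℝ) • Pex ∧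
        (![1,1,1] : Fin 3 → ℝ) - (fun i => (x i : ℝ)) ∈ Pex} =
      {![1,1,1]} := by
  ext x
  simp only [Set.mem_setOf_eq, Set.mem_singleton_iff]
  constructor
  · rintro ⟨h3P, hP⟩
    rw [Set.mem_smul_set_iff_inv_smul_mem₀ (by norm_num : (3:ℝ) ≠ 0)] at h3P
    rw [mem_Pex_iff] at h3P hP
    simp only [Pi.smul_apply, smul_eq_mul, Pi.sub_apply] at h3P hP
    obtain ⟨a1, a2, a3, a4⟩ := h3P
    obtain ⟨b1, b2, b3, b4⟩ := hP
    norm_num [Matrix.cons_val_two, Matrix.cons_val_zero, Matrix.cons_val_one, Matrix.head_cons, Matrix.tail_cons] at b1 b2 b3 b4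
    have c1 : (0:ℝ) ≤ (x 2 : ℝ) := by linarith
    have c2 : (x 2 : ℝ) ≤ 2 * (x 0 : ℝ) := by linarith
    have c3 : (x 2 : ℝ) ≤ 2 * (x 1 : ℝ) := by linarith
    have c4 : 2 * (x 0 : ℝ) + 2 * (x 1 : ℝ) - (x 2 : ℝ) ≤ 6 := by linarith
    have d1 : (x 2 : ℝ) ≤ 1 := by linarith
    have d2 : 2 * (x 0 : ℝ) ≤ 1 + (x 2 : ℝ) := by linarith
    have d3 : 2 * (x 1 : ℝ) ≤ 1 + (x 2 : ℝ) := by linarith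
    have d4 : 2 * (x 0 : ℝ) + 2 * (x 1 : ℝ) ≥ 1 + (x 2 : ℝ) := by linarith
    have i1 : (0:ℤ) ≤ x 2 := by exact_mod_cast c1
    have i2 : x 2 ≤ 2 * x 0 := by exact_mod_cast c2
    have i3 : x 2 ≤ 2 * x 1 := by exact_mod_cast c3
    have i5 : x 2 ≤ 1 := by exact_mod_cast d1
    have i6 : 2 * x 0 ≤ 1 + x 2 := by exact_mod_cast d2
    have i7 : 2 * x 1 ≤ 1 + x 2 := by exact_mod_cast d3
    have i8 : 2 * x 0 + 2 * x 1 ≥ 1 + x 2 := by exact_mod_cast d4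
    have hx0 : x 0 = 1 := by omega
    have hx1 : x 1 = 1 := by omega
    have hx2 : x 2 = 1 := by omega
    funext j
    fin_cases j <;> simp [hx0, hx1, hx2]
  · rintro rfl
    constructor
    · rw [Set.mem_smul_set_iff_inv_smul_mem₀ (by norm_num : (3:ℝ) ≠ 0), mem_Pex_iff]
      norm_num [Matrix.cons_val_two, Matrix.cons_val_zero, Matrix.cons_val_one, Matrix.head_cons, Matrix.tail_cons]
    · rw [mem_Pex_iff]
      norm_num [Matrix.cons_val_two, Matrix.cons_val_zero, Matrix.cons_val_one, Matrix.head_cons, Matrix.tail_cons]
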